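/- Let T be a finite tree with at least one edge and let T' be obtained from T by attaching one new pendant edge at an arbitrary vertex of T (adding one new vertex adjacent only to that vertex). If λ_max(R_T) = 0, then λ_max(R_{T'}) > 0. -/

import Mathlib

open Finset Matrix

/-- The Ricci matrix of a graph, indexed by edges: diagonal entry `-(1/d_x + 1/d_y)`
for an edge `{x,y}`, entry `1/d_z` for distinct edges sharing the vertex `z`, and `0`
for disjoint edges.  Here the degree of `v` is `(G.neighborSet v).ncard`. -/
noncomputable def ricciMatrix {V : Type*} (G : SimpleGraph V) [Fintype V] [DecidableEq V] :
    Matrix G.edgeSet G.edgeSet ℝ := fun e f =>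
  if (e : Sym2 V) = (f : Sym2 V) then
    -∑ v : V, if v ∈ (e : Sym2 V) then 1 / ((G.neighborSet v).ncard : ℝ) else 0
  else
    ∑ v : V, if v ∈ (e : Sym2 V) ∧ v ∈ (f : Sym2 V) then 1 / ((G.neighborSet v).ncard : ℝ) else 0

/-- The largest eigenvalue of a real matrix. -/
noncomputable def lambdaMax {n : Type*} [Fintype n] (M : Matrix n n ℝ) : ℝ :=
  sSup {t : ℝ | ∃ w : n → ℝ, w ≠ 0 ∧ M.mulVec w = t • w}

/-- The graph obtained from `G` by attaching one new pendant vertex (`none`) adjacent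
only to the vertex `v`. -/
def attachPendant {V : Type*} (G : SimpleGraph V) (v : V) : SimpleGraph (Option V) where
  Adj x y := match x, y with
    | none, none => False
    | none, some b => b = v
    | some a, none => a = v
    | some a, some b => G.Adj a b
  symm := by
    constructor
    rintro (_ | a) (_ | b) h
    · exact h
    · exact h
    · exact h
    · exact G.adj_symm h
  loopless := by
    constructor
    rintro (_ | a) h
    · exact h
    · exact G.irrefl h

instance {V : Type*} (G : SimpleGraph V) [DecidableEq V] [DecidableRel G.Adj] (v : V) :
    DecidableRel (attachPendant G v).Adj := fun x y =>
  match x, y with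
  | none, none => isFalse id
  | none, some b => inferInstanceAs (Decidable (b = v))
  | some a, none => inferInstanceAs (Decidable (a = v))
  | some a, some b => inferInstanceAs (Decidable (G.Adj a b))

section Bridge
variable {n : Type*} [Fintype n] [DecidableEq n] [Nonempty n] {M : Matrix n n ℝ}
  (hM : M.IsHermitian)

lemma rayleigh_le_sup' (x : n → ℝ) :
    x ⬝ᵥ M.mulVec x ≤ (Finset.univ.sup' Finset.univ_nonempty hM.eigenvalues) * (x ⬝ᵥ x) := by
  set μ := Finset.univ.sup' Finset.univ_nonempty hM.eigenvalues with hμ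
  have hP : (μ • (1 : Matrix n n ℝ) - M).PosSemidef := by
    have hdiag : (diagonal (fun i => μ - hM.eigenvalues i)).PosSemidef :=
      posSemidef_diagonal_iff.mpr fun i => sub_nonneg.2 (Finset.le_sup' _ (Finset.mem_univ i))
    have h1 : μ • (1 : Matrix n n ℝ) - M
        = (hM.eigenvectorUnitary : Matrix n n ℝ) * diagonal (fun i => μ - hM.eigenvalues i)
          * (star (hM.eigenvectorUnitary : Matrix n n ℝ)) := by
      conv_lhs => rw [hM.spectral_theorem]
      have hU : (hM.eigenvectorUnitary : Matrix n n ℝ)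
          * (star (hM.eigenvectorUnitary : Matrix n n ℝ)) = 1 :=
        Matrix.mem_unitaryGroup_iff.mp hM.eigenvectorUnitary.2
      have : μ • (1 : Matrix n n ℝ) = (hM.eigenvectorUnitary : Matrix n n ℝ)
          * (μ • (1 : Matrix n n ℝ)) * (star (hM.eigenvectorUnitary : Matrix n n ℝ)) := by
        rw [Matrix.mul_smul, Matrix.mul_one, Matrix.smul_mul, hU]
      rw [this]
      rw [Unitary.conjStarAlgAut_apply, ← Matrix.sub_mul, ← Matrix.mul_sub]
      congr 1
      congr 1
      have : (μ • (1 : Matrix n n ℝ)) = diagonal (fun _ : n => μ) := by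
        ext i j
        by_cases h : i = j <;> simp [h, Matrix.one_apply, Matrix.diagonal_apply]
      rw [this, ← Matrix.diagonal_sub]
      congr 1
    rw [h1, Matrix.star_eq_conjTranspose]
    exact hdiag.mul_mul_conjTranspose_same _
  have := hP.dotProduct_mulVec_nonneg x
  rw [star_trivial, Matrix.sub_mulVec, Matrix.smul_mulVec, Matrix.one_mulVec,
    dotProduct_sub, dotProduct_smul] at this
  have h2 : (0:ℝ) ≤ μ * (x ⬝ᵥ x) - x ⬝ᵥ M.mulVec x := by simpa [smul_eq_mul] using this
  linarith

lemma lambdaMax_eq_sup' :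
    lambdaMax M = Finset.univ.sup' Finset.univ_nonempty hM.eigenvalues := by
  obtain ⟨j, -, hj⟩ := Finset.exists_mem_eq_sup' (Finset.univ_nonempty (α := n)) hM.eigenvalues
  have hwne : (⇑(hM.eigenvectorBasis j) : n → ℝ) ≠ 0 := by
    intro h0
    have h1 : ‖hM.eigenvectorBasis j‖ = 1 := hM.eigenvectorBasis.orthonormal.1 j
    have : (hM.eigenvectorBasis j) = 0 := by
      ext i; exact congrFun h0 i
    rw [this, norm_zero] at h1; norm_num at h1
  have hmem : (Finset.univ.sup' Finset.univ_nonempty hM.eigenvalues)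
      ∈ {t : ℝ | ∃ w : n → ℝ, w ≠ 0 ∧ M.mulVec w = t • w} := by
    refine ⟨⇑(hM.eigenvectorBasis j), hwne, ?_⟩
    rw [hj]
    exact hM.mulVec_eigenvectorBasis j
  have hub : ∀ t ∈ {t : ℝ | ∃ w : n → ℝ, w ≠ 0 ∧ M.mulVec w = t • w},
      t ≤ Finset.univ.sup' Finset.univ_nonempty hM.eigenvalues := by
    rintro t ⟨w, hw, hMw⟩
    have hpos : 0 < w ⬝ᵥ w := by
      obtain ⟨i, hi⟩ := Function.ne_iff.mp hw
      exact Finset.sum_pos' (fun i _ => mul_self_nonneg (w i))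
        ⟨i, Finset.mem_univ i, mul_self_pos.mpr hi⟩
    have hray := rayleigh_le_sup' hM w
    rw [hMw, dotProduct_smul, smul_eq_mul] at hray
    exact le_of_mul_le_mul_right hray hpos
  exact le_antisymm (csSup_le ⟨_, hmem⟩ hub) (le_csSup ⟨_, hub⟩ hmem)

include hM in
lemma lambdaMax_exists_eigvec :
    ∃ w : n → ℝ, w ≠ 0 ∧ M.mulVec w = lambdaMax M • w := by
  obtain ⟨j, -, hj⟩ := Finset.exists_mem_eq_sup' (Finset.univ_nonempty (α := n)) hM.eigenvalues
  have hwne : (⇑(hM.eigenvectorBasis j) : n → ℝ) ≠ 0 := by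
    intro h0
    have h1 : ‖hM.eigenvectorBasis j‖ = 1 := hM.eigenvectorBasis.orthonormal.1 j
    have : (hM.eigenvectorBasis j) = 0 := by ext i; exact congrFun h0 i
    rw [this, norm_zero] at h1; norm_num at h1
  exact ⟨⇑(hM.eigenvectorBasis j), hwne, by
    rw [lambdaMax_eq_sup' hM, hj]; exact hM.mulVec_eigenvectorBasis j⟩

include hM in
lemma rayleigh_le_lambdaMax (x : n → ℝ) :
    x ⬝ᵥ M.mulVec x ≤ lambdaMax M * (x ⬝ᵥ x) := by
  rw [lambdaMax_eq_sup' hM]; exact rayleigh_le_sup' hM x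
end Bridge

section Quad
variable {V : Type*} [Fintype V] [DecidableEq V] (G : SimpleGraph V) [DecidableRel G.Adj]

lemma ricci_isHermitian : (ricciMatrix G).IsHermitian := by
  unfold Matrix.IsHermitian
  ext e f
  simp only [conjTranspose_apply, star_trivial, ricciMatrix]
  by_cases h : (e : Sym2 V) = (f : Sym2 V)
  · rw [if_pos h, if_pos h.symm, h]
  · rw [if_neg h, if_neg (Ne.symm h)]
    exact Finset.sum_congr rfl fun a _ => if_congr and_comm rfl rfl

lemma ricci_quadform (x : G.edgeSet → ℝ) :
    x ⬝ᵥ (ricciMatrix G).mulVec x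
    = ∑ a : V, (1 / ((G.neighborSet a).ncard : ℝ)) *
        ((∑ e : G.edgeSet, if a ∈ (e : Sym2 V) then x e else 0) ^ 2
          - 2 * ∑ e : G.edgeSet, if a ∈ (e : Sym2 V) then (x e) ^ 2 else 0) := by
  classical
  have key : ∀ e f : G.edgeSet, x e * (ricciMatrix G e f * x f)
      = (∑ a : V, (1 / ((G.neighborSet a).ncard : ℝ)) *
          ((if a ∈ (e : Sym2 V) then x e else 0) * (if a ∈ (f : Sym2 V) then x f else 0)))
        - (if e = f then 2 * ∑ a : V, (1 / ((G.neighborSet a).ncard : ℝ)) *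
          ((if a ∈ (e : Sym2 V) then x e else 0) * (if a ∈ (f : Sym2 V) then x f else 0)) else 0) := by
    intro e f
    by_cases h : (e : Sym2 V) = (f : Sym2 V)
    · have hef : e = f := Subtype.ext h
      subst hef
      rw [if_pos rfl]
      simp only [ricciMatrix, eq_self_iff_true, if_true]
      have hT : (∑ a : V, if a ∈ (e : Sym2 V) then 1 / ((G.neighborSet a).ncard : ℝ) else 0)
            * (x e * x e)
          = ∑ a : V, (1 / ((G.neighborSet a).ncard : ℝ)) *
            ((if a ∈ (e : Sym2 V) then x e else 0) * (if a ∈ (e : Sym2 V) then x e else 0)) := by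
        rw [Finset.sum_mul]
        exact Finset.sum_congr rfl fun a _ => by split_ifs <;> ring
      rw [← hT]
      ring
    · have hef : e ≠ f := fun hc => h (by rw [hc])
      rw [if_neg hef]
      simp only [ricciMatrix, if_neg h]
      rw [sub_zero, Finset.sum_mul, Finset.mul_sum]
      refine Finset.sum_congr rfl fun a _ => ?_
      split_ifs <;> (try ring) <;> simp_all
  have expand : x ⬝ᵥ (ricciMatrix G).mulVec x
      = ∑ e : G.edgeSet, ∑ f : G.edgeSet, x e * (ricciMatrix G e f * x f) := by
    simp [dotProduct, Matrix.mulVec, Finset.mul_sum]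
  rw [expand]
  have step1 : ∑ e : G.edgeSet, ∑ f : G.edgeSet, x e * (ricciMatrix G e f * x f)
      = (∑ e : G.edgeSet, ∑ f : G.edgeSet, ∑ a : V, (1 / ((G.neighborSet a).ncard : ℝ)) *
          ((if a ∈ (e : Sym2 V) then x e else 0) * (if a ∈ (f : Sym2 V) then x f else 0)))
        - ∑ e : G.edgeSet, ∑ f : G.edgeSet, (if e = f then 2 * ∑ a : V, (1 / ((G.neighborSet a).ncard : ℝ)) *
          ((if a ∈ (e : Sym2 V) then x e else 0) * (if a ∈ (f : Sym2 V) then x f else 0)) else 0) := by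
    rw [← Finset.sum_sub_distrib]
    refine Finset.sum_congr rfl fun e _ => ?_
    rw [← Finset.sum_sub_distrib]
    exact Finset.sum_congr rfl fun f _ => key e f
  rw [step1]
  have term1 : (∑ e : G.edgeSet, ∑ f : G.edgeSet, ∑ a : V, (1 / ((G.neighborSet a).ncard : ℝ)) *
          ((if a ∈ (e : Sym2 V) then x e else 0) * (if a ∈ (f : Sym2 V) then x f else 0)))
      = ∑ a : V, (1 / ((G.neighborSet a).ncard : ℝ)) *
          (∑ e : G.edgeSet, if a ∈ (e : Sym2 V) then x e else 0) ^ 2 := by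
    calc ∑ e : G.edgeSet, ∑ f : G.edgeSet, ∑ a : V, (1 / ((G.neighborSet a).ncard : ℝ)) *
          ((if a ∈ (e : Sym2 V) then x e else 0) * (if a ∈ (f : Sym2 V) then x f else 0))
        = ∑ e : G.edgeSet, ∑ a : V, ∑ f : G.edgeSet, (1 / ((G.neighborSet a).ncard : ℝ)) *
          ((if a ∈ (e : Sym2 V) then x e else 0) * (if a ∈ (f : Sym2 V) then x f else 0)) :=
          Finset.sum_congr rfl fun e _ => Finset.sum_comm
      _ = ∑ a : V, ∑ e : G.edgeSet, ∑ f : G.edgeSet, (1 / ((G.neighborSet a).ncard : ℝ)) *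
          ((if a ∈ (e : Sym2 V) then x e else 0) * (if a ∈ (f : Sym2 V) then x f else 0)) :=
          Finset.sum_comm
      _ = ∑ a : V, (1 / ((G.neighborSet a).ncard : ℝ)) *
          (∑ e : G.edgeSet, if a ∈ (e : Sym2 V) then x e else 0) ^ 2 := by
          refine Finset.sum_congr rfl fun a _ => ?_
          rw [sq, Finset.sum_mul_sum Finset.univ Finset.univ
            (fun e : G.edgeSet => if a ∈ (e : Sym2 V) then x e else 0)
            (fun f : G.edgeSet => if a ∈ (f : Sym2 V) then x f else 0), Finset.mul_sum]
          refine Finset.sum_congr rfl fun e _ => ?_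
          rw [Finset.mul_sum]
  have term2 : (∑ e : G.edgeSet, ∑ f : G.edgeSet, (if e = f then 2 * ∑ a : V, (1 / ((G.neighborSet a).ncard : ℝ)) *
          ((if a ∈ (e : Sym2 V) then x e else 0) * (if a ∈ (f : Sym2 V) then x f else 0)) else 0))
      = ∑ a : V, (1 / ((G.neighborSet a).ncard : ℝ)) *
          (2 * ∑ e : G.edgeSet, if a ∈ (e : Sym2 V) then (x e) ^ 2 else 0) := by
    have h1 : ∀ e : G.edgeSet, (∑ f : G.edgeSet, (if e = f then 2 * ∑ a : V, (1 / ((G.neighborSet a).ncard : ℝ)) *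
          ((if a ∈ (e : Sym2 V) then x e else 0) * (if a ∈ (f : Sym2 V) then x f else 0)) else 0))
        = ∑ a : V, (1 / ((G.neighborSet a).ncard : ℝ)) *
          (2 * if a ∈ (e : Sym2 V) then (x e) ^ 2 else 0) := by
      intro e
      rw [Finset.sum_ite_eq]
      rw [if_pos (Finset.mem_univ e), Finset.mul_sum]
      exact Finset.sum_congr rfl fun a _ => by split_ifs <;> ring
    rw [Finset.sum_congr rfl fun e _ => h1 e, Finset.sum_comm]
    refine Finset.sum_congr rfl fun a _ => ?_
    rw [Finset.mul_sum, Finset.mul_sum]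
  rw [term1, term2, ← Finset.sum_sub_distrib]
  exact Finset.sum_congr rfl fun a _ => by ring
end Quad

section Aux
open Finset Matrix
variable {V : Type*} [Fintype V] [DecidableEq V] (G : SimpleGraph V) [DecidableRel G.Adj]

lemma card_filter_mem_eq_degree (v : V) :
    (Finset.univ.filter fun e : G.edgeSet => v ∈ (e : Sym2 V)).card
      = (G.neighborSet v).ncard := by
  rw [← Fintype.card_subtype]
  have e1 : {e : G.edgeSet // v ∈ (e : Sym2 V)} ≃ G.incidenceSet v :=
    { toFun := fun x => ⟨x.1.1, x.1.2, x.2⟩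
      invFun := fun x => ⟨⟨x.1, x.2.1⟩, x.2.2⟩
      left_inv := fun x => rfl
      right_inv := fun x => rfl }
  rw [Fintype.card_congr (e1.trans (G.incidenceSetEquivNeighborSet v))]
  simp [Set.ncard_eq_toFinset_card', Set.toFinset_card]

lemma one_le_ncard_neighbor {z : V} {e : G.edgeSet} (hz : z ∈ (e : Sym2 V)) :
    1 ≤ (G.neighborSet z).ncard := by
  obtain ⟨b, hb⟩ := Sym2.mem_iff_exists.mp hz
  have hadj : G.Adj z b := by
    have h2 := e.2
    rw [hb] at h2
    exact (SimpleGraph.mem_edgeSet G).mp h2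
  have hne : (G.neighborSet z).Nonempty := ⟨b, hadj⟩
  exact (Set.ncard_pos (Set.toFinite _)).mpr hne

lemma ricci_offdiag_nonneg {e f : G.edgeSet} (hef : (e : Sym2 V) ≠ (f : Sym2 V)) :
    0 ≤ ricciMatrix G e f := by
  simp only [ricciMatrix, if_neg hef]
  exact Finset.sum_nonneg fun a _ => by positivity

lemma ricci_offdiag_pos {e f : G.edgeSet} (hef : (e : Sym2 V) ≠ (f : Sym2 V))
    {z : V} (hz : z ∈ (e : Sym2 V)) (hz' : z ∈ (f : Sym2 V)) :
    0 < ricciMatrix G e f := by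
  simp only [ricciMatrix, if_neg hef]
  apply Finset.sum_pos' (fun a _ => by positivity)
  refine ⟨z, Finset.mem_univ z, ?_⟩
  rw [if_pos ⟨hz, hz'⟩]
  have h1 : (0:ℝ) < ((G.neighborSet z).ncard : ℝ) := by
    exact_mod_cast Nat.lt_of_lt_of_le Nat.zero_lt_one (one_le_ncard_neighbor G hz)
  positivity
end Aux

lemma sum_ite_single {α : Type*} [Fintype α] [DecidableEq α] (v : α) (X : ℝ) (Y : α → ℝ) :
    (∑ a : α, if a = v then X else Y a) = X + ∑ a : α, Y a - Y v := by
  rw [← Finset.sum_erase_add Finset.univ _ (Finset.mem_univ v), if_pos rfl,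
    ← Finset.sum_erase_add Finset.univ Y (Finset.mem_univ v),
    Finset.sum_congr rfl fun a ha => if_neg (Finset.ne_of_mem_erase ha)]
  ring

set_option maxHeartbeats 2000000 in
/-- **Strict crossing of the zero level set.**
If `T` is a finite tree with at least one edge, `T'` is obtained from `T` by attaching
one pendant edge at an arbitrary vertex `v`, and `λ_max(R_T) = 0`, then
`λ_max(R_{T'}) > 0`. -/
theorem lambdaMax_pos_attachPendant_of_zero {V : Type*} [Fintype V] [DecidableEq V]
    (G : SimpleGraph V) [DecidableRel G.Adj] (hT : G.IsTree) (hE : G.edgeSet.Nonempty)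
    (v : V) (h : lambdaMax (ricciMatrix G) = 0) :
    0 < lambdaMax (ricciMatrix (attachPendant G v)) := by
  classical
  obtain ⟨eW, heW⟩ := hE
  haveI hne : Nonempty G.edgeSet := ⟨⟨eW, heW⟩⟩
  have hM : (ricciMatrix G).IsHermitian := ricci_isHermitian G
  obtain ⟨w, hw0, hMw⟩ := lambdaMax_exists_eigvec hM
  rw [h, zero_smul] at hMw
  have hray : ∀ x : G.edgeSet → ℝ, x ⬝ᵥ (ricciMatrix G).mulVec x ≤ 0 := fun x => by
    have h1 := rayleigh_le_lambdaMax hM x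
    rw [h, zero_mul] at h1
    exact h1
  set u : G.edgeSet → ℝ := fun e => |w e| with hu
  have hunn : ∀ e, 0 ≤ u e := fun e => abs_nonneg _
  -- quadratic form of u vanishes
  have hQw : w ⬝ᵥ (ricciMatrix G).mulVec w = 0 := by rw [hMw, dotProduct_zero]
  have hQu_ge : w ⬝ᵥ (ricciMatrix G).mulVec w ≤ u ⬝ᵥ (ricciMatrix G).mulVec u := by
    rw [ricci_quadform, ricci_quadform]
    apply Finset.sum_le_sum
    intro a _
    have h1 : (0:ℝ) ≤ 1 / ((G.neighborSet a).ncard : ℝ) := by positivity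
    apply mul_le_mul_of_nonneg_left _ h1
    have hQeq : (∑ e : G.edgeSet, if a ∈ (e : Sym2 V) then (w e) ^ 2 else 0)
        = ∑ e : G.edgeSet, if a ∈ (e : Sym2 V) then (u e) ^ 2 else 0 :=
      Finset.sum_congr rfl fun e _ => by rw [hu]; split_ifs <;> simp [sq_abs]
    have habs : |∑ e : G.edgeSet, if a ∈ (e : Sym2 V) then w e else 0|
        ≤ ∑ e : G.edgeSet, if a ∈ (e : Sym2 V) then u e else 0 := by
      refine (Finset.abs_sum_le_sum_abs _ _).trans_eq ?_
      refine Finset.sum_congr rfl fun e _ => ?_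
      rw [hu]; split_ifs <;> simp
    have hsq : (∑ e : G.edgeSet, if a ∈ (e : Sym2 V) then w e else 0) ^ 2
        ≤ (∑ e : G.edgeSet, if a ∈ (e : Sym2 V) then u e else 0) ^ 2 := by
      have h2 := abs_le.mp habs
      nlinarith [h2.1, h2.2]
    rw [hQeq]
    linarith
  have hQu0 : u ⬝ᵥ (ricciMatrix G).mulVec u = 0 :=
    le_antisymm (hray u) (hQw ▸ hQu_ge)
  -- u is in the kernel
  have hPSD : (-(ricciMatrix G)).PosSemidef := by
    refine Matrix.PosSemidef.of_dotProduct_mulVec_nonneg hM.neg fun x => ?_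
    rw [star_trivial, neg_mulVec, dotProduct_neg]
    linarith [hray x]
  have hMu : (ricciMatrix G).mulVec u = 0 := by
    have h1 : star u ⬝ᵥ (-(ricciMatrix G)).mulVec u = 0 := by
      rw [star_trivial, neg_mulVec, dotProduct_neg, hQu0, neg_zero]
    have h2 := (hPSD.dotProduct_mulVec_zero_iff u).mp h1
    rwa [neg_mulVec, neg_eq_zero] at h2
  -- an edge at v where u does not vanish
  obtain ⟨a0, b0, hab⟩ : ∃ a b, G.Adj a b := by
    revert heW
    induction eW using Sym2.ind with
    | _ a b => exact fun hw => ⟨a, b, (SimpleGraph.mem_edgeSet G).mp hw⟩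
  obtain ⟨y0, hvy0⟩ : ∃ y, G.Adj v y := by
    by_cases hva : v = a0
    · exact ⟨b0, hva ▸ hab⟩
    · obtain ⟨p⟩ := hT.isConnected.preconnected v a0
      cases p with
      | nil => exact absurd rfl hva
      | cons h' q => exact ⟨_, h'⟩
  have hex : ∃ e : G.edgeSet, v ∈ (e : Sym2 V) ∧ u e ≠ 0 := by
    by_contra hz
    push_neg at hz
    have hprop : ∀ e : G.edgeSet, u e = 0 → ∀ f : G.edgeSet, f ≠ e →
        (∃ z, z ∈ (e : Sym2 V) ∧ z ∈ (f : Sym2 V)) → u f = 0 := by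
      rintro e he0 f hfe ⟨z, hze, hzf⟩
      have hrow : ∑ f' : G.edgeSet, ricciMatrix G e f' * u f' = 0 := by
        have := congrFun hMu e
        simpa [Matrix.mulVec, dotProduct] using this
      have hterm : ∀ f' : G.edgeSet, f' ∈ Finset.univ →
          0 ≤ ricciMatrix G e f' * u f' := by
        intro f' _
        by_cases hf'e : (f' : Sym2 V) = (e : Sym2 V)
        · have : f' = e := Subtype.ext hf'e
          rw [this, he0, mul_zero]
        · exact mul_nonneg (ricci_offdiag_nonneg G (fun hc => hf'e hc.symm)) (hunn f')
      have hzero := (Finset.sum_eq_zero_iff_of_nonneg hterm).mp hrow f (Finset.mem_univ f)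
      have hcoene : (e : Sym2 V) ≠ (f : Sym2 V) := fun hc => hfe (Subtype.ext hc.symm)
      have hpos := ricci_offdiag_pos G hcoene hze hzf
      exact (mul_eq_zero.mp hzero).resolve_left (ne_of_gt hpos)
    have hPz : ∀ z : V, (∃ e : G.edgeSet, z ∈ (e : Sym2 V) ∧ u e = 0) →
        ∀ f : G.edgeSet, z ∈ (f : Sym2 V) → u f = 0 := by
      rintro z ⟨e, hze, he0⟩ f hzf
      by_cases hfe : f = e
      · rw [hfe]; exact he0
      · exact hprop e he0 f hfe ⟨z, hze, hzf⟩
    have hstep : ∀ z y : V, G.Adj z y →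
        (∃ e : G.edgeSet, z ∈ (e : Sym2 V) ∧ u e = 0) →
        (∃ e : G.edgeSet, y ∈ (e : Sym2 V) ∧ u e = 0) := by
      rintro z y hzy hP
      refine ⟨⟨s(z, y), (SimpleGraph.mem_edgeSet G).mpr hzy⟩, Sym2.mem_mk_right z y, ?_⟩
      exact hPz z hP _ (Sym2.mem_mk_left z y)
    have hreach : ∀ z y : V, G.Reachable z y →
        (∃ e : G.edgeSet, z ∈ (e : Sym2 V) ∧ u e = 0) →
        (∃ e : G.edgeSet, y ∈ (e : Sym2 V) ∧ u e = 0) := by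
      intro z y hzy
      obtain ⟨p⟩ := hzy
      induction p with
      | nil => exact id
      | cons h' p ih => exact fun hP => ih (hstep _ _ h' hP)
    have hPv : ∃ e : G.edgeSet, v ∈ (e : Sym2 V) ∧ u e = 0 :=
      ⟨⟨s(v, y0), (SimpleGraph.mem_edgeSet G).mpr hvy0⟩, Sym2.mem_mk_left v y0,
        hz _ (Sym2.mem_mk_left v y0)⟩
    apply hw0
    funext e
    have hc : ((e : Sym2 V)).out.1 ∈ (e : Sym2 V) := Sym2.out_fst_mem _
    have := hPz _ (hreach v _ (hT.isConnected.preconnected v _) hPv) e hc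
    rw [hu] at this
    exact abs_eq_zero.mp this
  obtain ⟨estar, hvstar, hustar⟩ := hex
  have hupos : 0 < u estar := lt_of_le_of_ne (hunn estar) (Ne.symm hustar)
  -- notation
  set D : ℝ := ((G.neighborSet v).ncard : ℝ) with hD
  set A : ℝ := ∑ e : G.edgeSet, if v ∈ (e : Sym2 V) then u e else 0 with hA
  set B : ℝ := ∑ e : G.edgeSet, if v ∈ (e : Sym2 V) then (u e) ^ 2 else 0 with hB
  have hApos : 0 < A := by
    apply Finset.sum_pos' (fun e _ => by split_ifs; exacts [hunn e, le_refl 0])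
    exact ⟨estar, Finset.mem_univ _, by rw [if_pos hvstar]; exact hupos⟩
  have hBpos : 0 < B := by
    apply Finset.sum_pos' (fun e _ => by split_ifs; exacts [sq_nonneg _, le_refl 0])
    exact ⟨estar, Finset.mem_univ _, by rw [if_pos hvstar]; positivity⟩
  have hD1 : (1:ℝ) ≤ D := by
    rw [hD]; exact_mod_cast one_le_ncard_neighbor G hvstar
  have hD0 : (0:ℝ) < D := lt_of_lt_of_le one_pos hD1
  have hCS : A ^ 2 ≤ D * B := by
    rw [hA, hB, ← Finset.sum_filter, ← Finset.sum_filter]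
    have := sq_sum_le_card_mul_sum_sq
      (s := Finset.univ.filter fun e : G.edgeSet => v ∈ (e : Sym2 V)) (f := u)
    calc (∑ e ∈ Finset.univ.filter (fun e : G.edgeSet => v ∈ (e : Sym2 V)), u e) ^ 2
        ≤ ((Finset.univ.filter fun e : G.edgeSet => v ∈ (e : Sym2 V)).card : ℝ)
          * ∑ e ∈ Finset.univ.filter (fun e : G.edgeSet => v ∈ (e : Sym2 V)), (u e) ^ 2 := by
          exact_mod_cast this
      _ = D * ∑ e ∈ Finset.univ.filter (fun e : G.edgeSet => v ∈ (e : Sym2 V)), (u e) ^ 2 := by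
          rw [card_filter_mem_eq_degree]
  -- the pendant graph
  set G' := attachPendant G v with hG'
  have hM' : (ricciMatrix G').IsHermitian := ricci_isHermitian G'
  have he0adj : G'.Adj none (some v) := rfl
  set e₀ : G'.edgeSet := ⟨s(none, some v), (SimpleGraph.mem_edgeSet G').mpr he0adj⟩ with he₀
  have hmap : ∀ e : G.edgeSet, (Sym2.map some (e : Sym2 V)) ∈ G'.edgeSet := by
    rintro ⟨e, he⟩
    revert he
    induction e using Sym2.ind with
    | _ a b =>
      intro he
      rw [Sym2.map_pair_eq]
      exact (SimpleGraph.mem_edgeSet G').mpr ((SimpleGraph.mem_edgeSet G).mp he)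
  set ι : G.edgeSet → G'.edgeSet := fun e => ⟨Sym2.map some (e : Sym2 V), hmap e⟩ with hι
  have hnone_not : ∀ e : G.edgeSet, (none : Option V) ∉ (Sym2.map some (e : Sym2 V)) := by
    intro e hc
    obtain ⟨c, -, hc2⟩ := Sym2.mem_map.mp hc
    exact Option.some_ne_none c hc2
  set ψ : Option G.edgeSet → G'.edgeSet := fun o => o.elim e₀ ι with hψ
  have hinj : Function.Injective ψ := by
    rintro (_ | e1) (_ | e2) hh
    · rfl
    · exfalso
      have h1 : (e₀ : Sym2 (Option V)) = Sym2.map some ((e2 : G.edgeSet) : Sym2 V) :=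
        congrArg Subtype.val hh
      have h2 : (none : Option V) ∈ Sym2.map some ((e2 : G.edgeSet) : Sym2 V) := by
        rw [← h1]
        exact Sym2.mem_mk_left _ _
      exact hnone_not e2 h2
    · exfalso
      have h1 : Sym2.map some ((e1 : G.edgeSet) : Sym2 V) = (e₀ : Sym2 (Option V)) :=
        congrArg Subtype.val hh
      have h2 : (none : Option V) ∈ Sym2.map some ((e1 : G.edgeSet) : Sym2 V) := by
        rw [h1]
        exact Sym2.mem_mk_left _ _
      exact hnone_not e1 h2
    · have h1 : Sym2.map some ((e1 : G.edgeSet) : Sym2 V)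
          = Sym2.map some ((e2 : G.edgeSet) : Sym2 V) := congrArg Subtype.val hh
      exact congrArg some (Subtype.ext (Sym2.map.injective (Option.some_injective V) h1))
  have hsurj : Function.Surjective ψ := by
    rintro ⟨e', he'⟩
    revert he'
    induction e' using Sym2.ind with
    | _ x y =>
      intro he'
      have hadj : G'.Adj x y := (SimpleGraph.mem_edgeSet G').mp he'
      cases x with
      | none =>
        cases y with
        | none => exact absurd hadj id
        | some b =>
          have hb : b = v := hadj
          subst hb
          exact ⟨none, rfl⟩
      | some a =>
        cases y with
        | none =>
          have ha : a = v := hadj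
          subst ha
          exact ⟨none, Subtype.ext Sym2.eq_swap⟩
        | some b =>
          have hab : G.Adj a b := hadj
          exact ⟨some ⟨s(a, b), (SimpleGraph.mem_edgeSet G).mpr hab⟩,
            Subtype.ext (Sym2.map_pair_eq some a b)⟩
  set Ψ : Option G.edgeSet ≃ G'.edgeSet := Equiv.ofBijective ψ ⟨hinj, hsurj⟩ with hΨ
  set sval : ℝ := A / (D + 2) with hsval
  set φ : G'.edgeSet → ℝ := fun e' => (Ψ.symm e').elim sval u with hφ
  have hφψ : ∀ o : Option G.edgeSet, φ (ψ o) = o.elim sval u := by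
    intro o
    have h1 : Ψ.symm (Ψ o) = o := Equiv.symm_apply_apply Ψ o
    have h2 : Ψ o = ψ o := rfl
    rw [hφ]
    dsimp only
    rw [← h2, h1]
  have hφ0 : φ e₀ = sval := hφψ none
  have hφι : ∀ e, φ (ι e) = u e := fun e => hφψ (some e)
  have hsum : ∀ F : G'.edgeSet → ℝ,
      (∑ e' : G'.edgeSet, F e') = F e₀ + ∑ e : G.edgeSet, F (ι e) := by
    intro F
    rw [← Equiv.sum_comp Ψ F, ← Fintype.sum_congr _ _ (fun o => rfl : ∀ o, F (Ψ o) = F (ψ o)),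
      univ_option, Finset.sum_insertNone]
    rfl
  have hm_some : ∀ (a : V) (e : G.edgeSet),
      (some a ∈ (ι e : Sym2 (Option V))) ↔ a ∈ (e : Sym2 V) := by
    intro a e
    constructor
    · intro hh
      obtain ⟨c, hc1, hc2⟩ := Sym2.mem_map.mp hh
      rwa [← Option.some_injective V hc2]
    · intro hh
      exact Sym2.mem_map.mpr ⟨a, hh, rfl⟩
  have hm_e0none : (none : Option V) ∈ (e₀ : Sym2 (Option V)) := Sym2.mem_mk_left _ _
  have hm_e0some : ∀ a : V, (some a ∈ (e₀ : Sym2 (Option V))) ↔ a = v := by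
    intro a
    simp [he₀, Sym2.mem_iff]
  -- degrees in G'
  have hnb_none : G'.neighborSet none = {some v} := by
    ext z
    cases z with
    | none =>
      simp only [SimpleGraph.mem_neighborSet, Set.mem_singleton_iff]
      exact iff_of_false id (by simp)
    | some b =>
      simp only [SimpleGraph.mem_neighborSet, Set.mem_singleton_iff]
      exact ⟨fun hb => congrArg some hb, fun hb => Option.some_injective V hb⟩
  have hd_none : ((G'.neighborSet none).ncard : ℝ) = 1 := by
    rw [hnb_none, Set.ncard_singleton]
    norm_num
  have hnb_some : ∀ a : V, a ≠ v → G'.neighborSet (some a) = some '' G.neighborSet a := by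
    intro a hav
    ext z
    cases z with
    | none =>
      simp only [SimpleGraph.mem_neighborSet]
      constructor
      · intro hadj
        exact absurd hadj hav
      · rintro ⟨c, -, hc⟩
        exact absurd hc (by simp)
    | some b =>
      simp only [SimpleGraph.mem_neighborSet]
      constructor
      · intro hadj
        exact ⟨b, hadj, rfl⟩
      · rintro ⟨c, hc1, hc2⟩
        have hcb : c = b := Option.some_injective V hc2
        subst hcb
        exact hc1
  have hd_some : ∀ a : V, a ≠ v →
      ((G'.neighborSet (some a)).ncard : ℝ) = ((G.neighborSet a).ncard : ℝ) := by
    intro a hav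
    rw [hnb_some a hav, Set.ncard_image_of_injective _ (Option.some_injective V)]
  have hnb_v : G'.neighborSet (some v) = insert none (some '' G.neighborSet v) := by
    ext z
    cases z with
    | none =>
      simp only [SimpleGraph.mem_neighborSet, Set.mem_insert_iff]
      exact iff_of_true rfl (by simp)
    | some b =>
      simp only [SimpleGraph.mem_neighborSet, Set.mem_insert_iff]
      constructor
      · intro hadj
        exact Or.inr ⟨b, hadj, rfl⟩
      · rintro (hc | ⟨c, hc1, hc2⟩)
        · exact absurd hc (by simp)
        · have hcb : c = b := Option.some_injective V hc2
          subst hcb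
          exact hc1
  have hd_v : ((G'.neighborSet (some v)).ncard : ℝ) = D + 1 := by
    rw [hnb_v, Set.ncard_insert_of_notMem (by rintro ⟨c, -, hc⟩; exact absurd hc (by simp))
      (Set.toFinite _), Set.ncard_image_of_injective _ (Option.some_injective V), hD]
    push_cast
    ring
  -- vertex sums in G'
  have hvert : ∀ (a : V) (g : G'.edgeSet → ℝ),
      (∑ e' : G'.edgeSet, if some a ∈ (e' : Sym2 (Option V)) then g e' else 0)
        = (if a = v then g e₀ else 0)
          + ∑ e : G.edgeSet, if a ∈ (e : Sym2 V) then g (ι e) else 0 := by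
    intro a g
    rw [hsum (fun e' => if some a ∈ (e' : Sym2 (Option V)) then g e' else 0)]
    congr 1
    · by_cases hav : a = v
      · rw [if_pos ((hm_e0some a).mpr hav), if_pos hav]
      · rw [if_neg (fun hc => hav ((hm_e0some a).mp hc)), if_neg hav]
    · refine Finset.sum_congr rfl fun e _ => ?_
      by_cases hae : a ∈ (e : Sym2 V)
      · rw [if_pos ((hm_some a e).mpr hae), if_pos hae]
      · rw [if_neg (fun hc => hae ((hm_some a e).mp hc)), if_neg hae]
  have hS_none : (∑ e' : G'.edgeSet,
      if (none : Option V) ∈ (e' : Sym2 (Option V)) then φ e' else 0) = sval := by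
    rw [hsum (fun e' => if (none : Option V) ∈ (e' : Sym2 (Option V)) then φ e' else 0)]
    rw [if_pos hm_e0none, hφ0]
    rw [Finset.sum_congr rfl fun e _ => if_neg (hnone_not e), Finset.sum_const_zero, add_zero]
  have hQ_none : (∑ e' : G'.edgeSet,
      if (none : Option V) ∈ (e' : Sym2 (Option V)) then (φ e') ^ 2 else 0) = sval ^ 2 := by
    rw [hsum (fun e' => if (none : Option V) ∈ (e' : Sym2 (Option V)) then (φ e') ^ 2 else 0)]
    rw [if_pos hm_e0none, hφ0]
    rw [Finset.sum_congr rfl fun e _ => if_neg (hnone_not e), Finset.sum_const_zero, add_zero]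
  have hSa : ∀ a : V, (∑ e' : G'.edgeSet, if some a ∈ (e' : Sym2 (Option V)) then φ e' else 0)
      = (if a = v then sval else 0) + ∑ e : G.edgeSet, if a ∈ (e : Sym2 V) then u e else 0 := by
    intro a
    rw [hvert a φ, hφ0]
    congr 1
    exact Finset.sum_congr rfl fun e _ => by rw [hφι]
  have hQa : ∀ a : V,
      (∑ e' : G'.edgeSet, if some a ∈ (e' : Sym2 (Option V)) then (φ e') ^ 2 else 0)
      = (if a = v then sval ^ 2 else 0)
        + ∑ e : G.edgeSet, if a ∈ (e : Sym2 V) then (u e) ^ 2 else 0 := by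
    intro a
    rw [hvert a (fun e' => (φ e') ^ 2), hφ0]
    congr 1
    exact Finset.sum_congr rfl fun e _ => by rw [hφι]
  -- the quadratic form identity for G at u, evaluated
  have hQsum : (∑ a : V, (1 / ((G.neighborSet a).ncard : ℝ)) *
      ((∑ e : G.edgeSet, if a ∈ (e : Sym2 V) then u e else 0) ^ 2
        - 2 * ∑ e : G.edgeSet, if a ∈ (e : Sym2 V) then (u e) ^ 2 else 0)) = 0 := by
    rw [← ricci_quadform]
    exact hQu0
  -- assemble the quadratic form of φ in G'
  have hQval : φ ⬝ᵥ (ricciMatrix G').mulVec φ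
      = -(sval ^ 2) - (1 / D) * (A ^ 2 - 2 * B)
        + (1 / (D + 1)) * ((sval + A) ^ 2 - 2 * (sval ^ 2 + B)) := by
    rw [ricci_quadform G' φ, univ_option, Finset.sum_insertNone]
    have hvterm : ∀ a : V, (1 / ((G'.neighborSet (some a)).ncard : ℝ)) *
        ((∑ e' : G'.edgeSet, if some a ∈ (e' : Sym2 (Option V)) then φ e' else 0) ^ 2
          - 2 * ∑ e' : G'.edgeSet, if some a ∈ (e' : Sym2 (Option V)) then (φ e') ^ 2 else 0)
        = if a = v
          then (1 / (D + 1)) * ((sval + A) ^ 2 - 2 * (sval ^ 2 + B))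
          else (1 / ((G.neighborSet a).ncard : ℝ)) *
            ((∑ e : G.edgeSet, if a ∈ (e : Sym2 V) then u e else 0) ^ 2
              - 2 * ∑ e : G.edgeSet, if a ∈ (e : Sym2 V) then (u e) ^ 2 else 0) := by
      intro a
      rw [hSa a, hQa a]
      by_cases hav : a = v
      · subst hav
        rw [if_pos rfl, if_pos rfl, if_pos rfl, hd_v, ← hA, ← hB]
      · rw [if_neg hav, if_neg hav, if_neg hav, hd_some a hav, zero_add, zero_add]
    rw [Finset.sum_congr rfl fun a _ => hvterm a, sum_ite_single v _ _, hQsum, hd_none, hS_none,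
      hQ_none, ← hA, ← hB, ← hD]
    ring
  have hposQ : 0 < φ ⬝ᵥ (ricciMatrix G').mulVec φ := by
    rw [hQval, hsval]
    have hkey : A ^ 2 < B * (D + 2) := lt_of_le_of_lt hCS (by nlinarith)
    have hident : -((A / (D + 2)) ^ 2) - (1 / D) * (A ^ 2 - 2 * B)
        + (1 / (D + 1)) * ((A / (D + 2) + A) ^ 2 - 2 * ((A / (D + 2)) ^ 2 + B))
        = 2 * (B * (D + 2) - A ^ 2) / (D * (D + 1) * (D + 2)) := by
      field_simp
      ring
    rw [hident]
    exact div_pos (by linarith) (mul_pos (mul_pos hD0 (by linarith)) (by linarith))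
  haveI : Nonempty G'.edgeSet := ⟨e₀⟩
  by_contra hcon
  push_neg at hcon
  have h1 := rayleigh_le_lambdaMax hM' φ
  have h2 : (0:ℝ) ≤ φ ⬝ᵥ φ := Finset.sum_nonneg fun e _ => mul_self_nonneg _
  nlinarith
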